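/- Let $\mu(z) = \sum_{s \ge 0} r_s z^s$ be the probability generating function of the offspring distribution of a Galton–Watson process started with $k$ individuals. Then the probability that the total progeny equals $n$ is $\frac{k}{n}$ times the coefficient of $z^{n-k}$ in $[\mu(z)]^n$. -/

import Mathlib

open scoped ENNReal

/-- The exploration walk after `m` steps: starting at `k`, the walk of a branching
process started from `k` individuals moves by `x_i - 1` at each step; `walkSum n x m`
is the displacement `∑_{i<m} (x_i - 1)`. -/
def walkSum (n : ℕ) (x : Fin n → ℕ) (m : ℕ) : ℤ :=
  ∑ i ∈ Finset.univ.filter (fun i : Fin n => (i : ℕ) < m), ((x i : ℤ) - 1)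

/-- The event that the total progeny of a branching process started from `k`
individuals, with offspring counts `x_0, x_1, …` in exploration (depth-first) order,
equals `n`: the exploration walk started at `k` first hits `0` at time `n`. -/
def progenyEvent (k n : ℕ) (x : Fin n → ℕ) : Prop :=
  (∀ m : ℕ, m < n → -(k : ℤ) < walkSum n x m) ∧ walkSum n x n = -(k : ℤ)

instance (k n : ℕ) : DecidablePred (progenyEvent k n) := fun _ => by
  unfold progenyEvent; infer_instance

/-- The probability that the total progeny of a branching process started from `k`
individuals with offspring distribution `r` equals `n`. -/
noncomputable def progenyProb (r : ℕ → ℝ≥0∞) (k n : ℕ) : ℝ≥0∞ :=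
  ∑' x : Fin n → ℕ, if progenyEvent k n x then ∏ i, r (x i) else 0


section CycleLemma

variable (a : ℕ → ℤ)

/-- Partial sums of `a`. -/
def walkS (m : ℕ) : ℤ := ∑ i ∈ Finset.range m, a i

lemma walkS_zero : walkS a 0 = 0 := by simp [walkS]

lemma walkS_succ (m : ℕ) : walkS a (m + 1) = walkS a m + a m :=
  Finset.sum_range_succ a m

variable {a} {n k : ℕ}

lemma walkS_ivt (hstep : ∀ i, -1 ≤ a i) {p q : ℕ} (hpq : p ≤ q) {v : ℤ}
    (h1 : walkS a q ≤ v) (h2 : v ≤ walkS a p) :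
    ∃ m, p ≤ m ∧ m ≤ q ∧ walkS a m = v := by
  induction q, hpq using Nat.le_induction with
  | base => exact ⟨p, le_rfl, le_rfl, le_antisymm h1 h2⟩
  | succ q hq ih =>
    by_cases hc : walkS a q ≤ v
    · obtain ⟨m, hm1, hm2, hm3⟩ := ih hc
      exact ⟨m, hm1, hm2.trans (Nat.le_succ q), hm3⟩
    · push_neg at hc
      have h3 := hstep q
      have h4 := walkS_succ a q
      exact ⟨q + 1, Nat.le_succ_of_le hq, le_rfl, by omega⟩

lemma walkS_per (hper : ∀ i, a (i + n) = a i) (hsum : walkS a n = -(k : ℤ)) :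
    ∀ m, walkS a (m + n) = walkS a m - k := by
  intro m
  induction m with
  | zero => simpa [walkS_zero] using hsum
  | succ m ih =>
    have h1 : walkS a (m + 1 + n) = walkS a (m + n) + a (m + n) := by
      rw [show m + 1 + n = m + n + 1 by ring, walkS_succ]
    rw [h1, hper m, ih, walkS_succ]
    ring

/-- The cycle lemma: among the `n` rotations, exactly `k` are "good" (the walk
stays strictly above its endpoint before time `n`). -/
theorem cycle_count (hstep : ∀ i, -1 ≤ a i) (hper : ∀ i, a (i + n) = a i)
    (hn : 0 < n) (hk : 0 < k) (hsum : walkS a n = -(k : ℤ)) :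
    ((Finset.range n).filter
        (fun j => ∀ m < n, walkS a (j + n) < walkS a (j + m))).card = k := by
  have hper' := walkS_per hper hsum
  obtain ⟨m0, hm0mem, hm0min⟩ :=
    Finset.exists_min_image (Finset.range n) (walkS a) ⟨0, Finset.mem_range.2 hn⟩
  rw [Finset.mem_range] at hm0mem
  set M := walkS a m0 with hM
  have hmin : ∀ i < n, M ≤ walkS a i := fun i hi => hm0min i (Finset.mem_range.2 hi)
  have hM0 : M ≤ 0 := by
    have := hmin 0 hn
    rw [walkS_zero] at this
    linarith
  have hcard : ((Finset.Icc (M - k) (M - 1)).card = k) := by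
    rw [Int.card_Icc]
    omega
  rw [← hcard]
  apply Finset.card_nbij (i := fun j => walkS a (j + n))
  · -- maps to Icc
    intro j hj
    rw [Finset.mem_coe, Finset.mem_filter, Finset.mem_range] at hj
    obtain ⟨hjn, hgood⟩ := hj
    simp only [Finset.mem_coe, Finset.mem_Icc]
    constructor
    · have := hmin j hjn
      rw [hper' j]
      omega
    · rcases le_or_gt j m0 with hcase | hcase
      · have h1 := hgood (m0 - j) (by omega)
        rw [show j + (m0 - j) = m0 by omega] at h1
        omega
      · have h1 := hgood (m0 + n - j) (by omega)
        rw [show j + (m0 + n - j) = m0 + n by omega, hper' m0] at h1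
        omega
  · -- injective
    intro j1 hj1 j2 hj2 heq
    have heq' : walkS a (j1 + n) = walkS a (j2 + n) := heq
    rw [Finset.mem_coe, Finset.mem_filter, Finset.mem_range] at hj1 hj2
    by_contra hne
    rcases Nat.lt_or_ge j1 j2 with hlt | hge
    · have h1 := hj2.2 (j1 + n - j2) (by omega)
      rw [show j2 + (j1 + n - j2) = j1 + n by omega] at h1
      omega
    · have hlt : j2 < j1 := by omega
      have h1 := hj1.2 (j2 + n - j1) (by omega)
      rw [show j1 + (j2 + n - j1) = j2 + n by omega] at h1
      omega
  · -- surjective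
    intro v hv
    rw [Finset.mem_coe, Finset.mem_Icc] at hv
    have hv1 : v ≤ M - 1 := hv.2
    have hv2 : M - k ≤ v := hv.1
    have hm0n : walkS a (m0 + n) = M - k := by rw [hper' m0]
    obtain ⟨m, -, hm2, hm3⟩ := walkS_ivt (v := v) hstep (Nat.zero_le (m0 + n))
      (by rw [hm0n]; omega) (by rw [walkS_zero]; omega)
    have hex : ∃ m, walkS a m = v := ⟨m, hm3⟩
    set τ := Nat.find hex with hτdef
    have hτv : walkS a τ = v := Nat.find_spec hex
    have hτm : τ ≤ m := Nat.find_min' hex hm3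
    have hrec : ∀ i < τ, v < walkS a i := by
      intro i hi
      by_contra hle
      push_neg at hle
      obtain ⟨m', -, hm'2, hm'3⟩ := walkS_ivt (v := v) hstep (Nat.zero_le i) hle
        (by rw [walkS_zero]; omega)
      have := Nat.find_min' hex hm'3
      omega
    have hτn : n ≤ τ := by
      by_contra hlt
      push_neg at hlt
      have := hmin τ hlt
      omega
    have hτ2n : τ < 2 * n := by omega
    refine ⟨τ - n, ?_, ?_⟩
    · rw [Finset.mem_coe, Finset.mem_filter, Finset.mem_range]
      refine ⟨by omega, fun m' hm' => ?_⟩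
      rw [show τ - n + n = τ by omega, hτv]
      exact hrec (τ - n + m') (by omega)
    · show walkS a (τ - n + n) = v
      rw [show τ - n + n = τ by omega, hτv]

end CycleLemma

lemma walkSum_eq_range {n : ℕ} (x : Fin n → ℕ) {m : ℕ} (hm : m ≤ n) :
    walkSum n x m
      = ∑ i ∈ Finset.range m, (if h : i < n then ((x ⟨i, h⟩ : ℤ) - 1) else 0) := by
  have hfil : Finset.range m = (Finset.range n).filter (· < m) := by
    ext i
    simp only [Finset.mem_range, Finset.mem_filter]
    omega
  rw [hfil, Finset.sum_filter, ← Fin.sum_univ_eq_sum_range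
      (fun i => if i < m then (if h : i < n then ((x ⟨i, h⟩ : ℤ) - 1) else 0) else 0) n,
    walkSum, Finset.sum_filter]
  apply Finset.sum_congr rfl
  intro i _
  simp [i.isLt]

lemma sum_of_event {k n : ℕ} (hn : k ≤ n) {x : Fin n → ℕ}
    (hx : walkSum n x n = -(k : ℤ)) : ∑ i, x i = n - k := by
  have h1 : walkSum n x n = (∑ i, (x i : ℤ)) - n := by
    rw [walkSum, Finset.filter_true_of_mem (fun i _ => i.isLt), Finset.sum_sub_distrib]
    simp [Finset.card_univ]
  rw [h1] at hx
  have h2 : ((∑ i, x i : ℕ) : ℤ) = ∑ i, (x i : ℤ) := by push_cast; rfl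
  omega

/-- Exactly `k` of the `n` rotations of `l` satisfy the progeny event. -/
lemma rot_count {n k : ℕ} (hk : 0 < k) (hn : k ≤ n) (l : Fin n → ℕ)
    (hl : ∑ i, l i = n - k) :
    (Finset.univ.filter
      (fun j : Fin n => progenyEvent k n (fun i => l (i + j)))).card = k := by
  have hn0 : 0 < n := lt_of_lt_of_le hk hn
  set a : ℕ → ℤ := fun i => (l ⟨i % n, Nat.mod_lt i hn0⟩ : ℤ) - 1 with ha
  have hstep : ∀ i, -1 ≤ a i := by
    intro i
    have h : (0 : ℤ) ≤ (l ⟨i % n, Nat.mod_lt i hn0⟩ : ℤ) := Int.natCast_nonneg _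
    simp only [ha]
    omega
  have hper : ∀ i, a (i + n) = a i := by
    intro i
    simp only [ha, Nat.add_mod_right]
  have haval : ∀ i : Fin n, a i.val = (l i : ℤ) - 1 := by
    intro i
    simp only [ha, Nat.mod_eq_of_lt i.isLt, Fin.eta]
  have hsum : walkS a n = -(k : ℤ) := by
    rw [walkS, ← Fin.sum_univ_eq_sum_range (fun i => a i) n]
    have h1 : ∑ i : Fin n, a i.val = (∑ i, (l i : ℤ)) - n := by
      rw [Finset.sum_congr rfl (fun i _ => haval i), Finset.sum_sub_distrib]
      simp [Finset.card_univ]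
    have h2 : ((∑ i, l i : ℕ) : ℤ) = ∑ i, (l i : ℤ) := by push_cast; rfl
    rw [h1, ← h2, hl]
    omega
  have hper' := walkS_per hper hsum
  have hbridge : ∀ j : Fin n, progenyEvent k n (fun i => l (i + j)) ↔
      (∀ m < n, walkS a (j.val + n) < walkS a (j.val + m)) := by
    intro j
    have hws : ∀ m ≤ n, walkSum n (fun i => l (i + j)) m
        = walkS a (j.val + m) - walkS a j.val := by
      intro m hm
      rw [walkSum_eq_range _ hm]
      have h2 : walkS a (j.val + m) - walkS a j.val
          = ∑ i ∈ Finset.range m, a (j.val + i) := by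
        rw [walkS, walkS, Finset.sum_range_add]
        ring
      rw [h2]
      apply Finset.sum_congr rfl
      intro i hi
      rw [Finset.mem_range] at hi
      have hin : i < n := lt_of_lt_of_le hi hm
      rw [dif_pos hin]
      have h3 : (⟨i, hin⟩ + j : Fin n) = ⟨(j.val + i) % n, Nat.mod_lt _ hn0⟩ := by
        apply Fin.ext
        simp [Fin.add_def, Nat.add_comm]
      simp only [ha, h3]
    constructor
    · rintro ⟨h1, -⟩ m hm
      have h4 := h1 m hm
      rw [hws m hm.le] at h4
      have h5 := hper' j.val
      omega
    · intro hg
      constructor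
      · intro m hm
        rw [hws m hm.le]
        have h4 := hg m hm
        have h5 := hper' j.val
        omega
      · rw [hws n le_rfl]
        have h5 := hper' j.val
        omega
  refine Eq.trans ?_ (cycle_count hstep hper hn0 hk hsum)
  apply Finset.card_nbij (i := Fin.val)
  · intro j hj
    rw [Finset.mem_coe, Finset.mem_filter] at hj
    rw [Finset.mem_coe, Finset.mem_filter, Finset.mem_range]
    exact ⟨j.isLt, (hbridge j).1 hj.2⟩
  · intro j1 _ j2 _ h
    exact Fin.val_injective h
  · intro m hm
    rw [Finset.mem_coe, Finset.mem_filter, Finset.mem_range] at hm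
    refine ⟨⟨m, hm.1⟩, ?_, rfl⟩
    rw [Finset.mem_coe, Finset.mem_filter]
    exact ⟨Finset.mem_univ _, (hbridge ⟨m, hm.1⟩).2 hm.2⟩

lemma coeff_pow_eq (r : ℕ → ℝ≥0∞) (n d : ℕ) :
    PowerSeries.coeff (R := ℝ≥0∞) d ((PowerSeries.mk r) ^ n)
      = ∑ l ∈ Finset.Nat.antidiagonalTuple n d, ∏ i, r (l i) := by
  have h1 : (PowerSeries.mk r) ^ n = ∏ _j : Fin n, PowerSeries.mk r := by
    simp [Finset.prod_const, Finset.card_univ]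
  rw [h1, PowerSeries.coeff_prod]
  apply Finset.sum_nbij' (i := fun g : Fin n →₀ ℕ => (g : Fin n → ℕ))
    (j := fun f : Fin n → ℕ => Finsupp.equivFunOnFinite.symm f)
  · intro g hg
    rw [Finset.mem_finsuppAntidiag] at hg
    rw [Finset.Nat.mem_antidiagonalTuple]
    exact hg.1
  · intro f hf
    rw [Finset.Nat.mem_antidiagonalTuple] at hf
    rw [Finset.mem_finsuppAntidiag]
    exact ⟨by simpa using hf, Finset.subset_univ _⟩
  · intro g _
    exact Finsupp.equivFunOnFinite.symm_apply_apply g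
  · intro f _
    rfl
  · intro g _
    simp [PowerSeries.coeff_mk]

/-- **Dwass's theorem, PGF form.** If `μ(z) = ∑ r_s z^s` is the probability generating
function of the offspring distribution of a Galton–Watson process started with `k`
individuals, then the probability that the total progeny equals `n` is `k/n` times the
coefficient of `z^(n-k)` in `μ(z)^n`. -/
theorem dwass_pgf (r : ℕ → ℝ≥0∞) (hr : ∑' s, r s = 1) (k n : ℕ)
    (hk : 1 ≤ k) (hn : k ≤ n) :
    progenyProb r k n =
      (k : ℝ≥0∞) / (n : ℝ≥0∞) *
        PowerSeries.coeff (R := ℝ≥0∞) (n - k) ((PowerSeries.mk r) ^ n) := by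
  have hn0 : 0 < n := lt_of_lt_of_le hk hn
  haveI : NeZero n := ⟨hn0.ne'⟩
  set T := Finset.Nat.antidiagonalTuple n (n - k) with hT
  have hP : progenyProb r k n
      = ∑ l ∈ T, if progenyEvent k n l then ∏ i, r (l i) else 0 := by
    rw [progenyProb]
    apply tsum_eq_sum
    intro x hx
    rw [if_neg]
    intro hE
    exact hx (Finset.Nat.mem_antidiagonalTuple.2 (sum_of_event hn hE.2))
  have hC := coeff_pow_eq r n (n - k)
  have key : (k : ℝ≥0∞) * ∑ l ∈ T, ∏ i, r (l i)
      = (n : ℝ≥0∞) * ∑ l ∈ T, (if progenyEvent k n l then ∏ i, r (l i) else 0) := by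
    calc (k : ℝ≥0∞) * ∑ l ∈ T, ∏ i, r (l i)
        = ∑ l ∈ T, (k : ℝ≥0∞) * ∏ i, r (l i) := Finset.mul_sum _ _ _
      _ = ∑ l ∈ T, ∑ j : Fin n,
            (if progenyEvent k n (fun i => l (i + j)) then ∏ i, r (l i) else 0) := by
          apply Finset.sum_congr rfl
          intro l hl
          rw [← Finset.sum_filter, Finset.sum_const,
            rot_count hk hn l (Finset.Nat.mem_antidiagonalTuple.1 hl), nsmul_eq_mul]
      _ = ∑ j : Fin n, ∑ l ∈ T,
            (if progenyEvent k n (fun i => l (i + j)) then ∏ i, r (l i) else 0) :=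
          Finset.sum_comm
      _ = ∑ j : Fin n, ∑ l ∈ T, (if progenyEvent k n l then ∏ i, r (l i) else 0) := by
          apply Finset.sum_congr rfl
          intro j _
          apply Finset.sum_nbij' (i := fun l : Fin n → ℕ => fun i => l (i + j))
            (j := fun l : Fin n → ℕ => fun i => l (i - j))
          · intro l hl
            rw [Finset.Nat.mem_antidiagonalTuple] at hl ⊢
            rw [← hl]
            exact Equiv.sum_comp (Equiv.addRight j) l
          · intro l hl
            rw [Finset.Nat.mem_antidiagonalTuple] at hl ⊢
            rw [← hl]
            exact Equiv.sum_comp (Equiv.subRight j) l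
          · intro l _
            funext i
            simp
          · intro l _
            funext i
            simp
          · intro l _
            have hprod : ∏ i, r (l (i + j)) = ∏ i, r (l i) :=
              Equiv.prod_comp (Equiv.addRight j) (fun i => r (l i))
            rw [hprod]
      _ = (n : ℝ≥0∞) * ∑ l ∈ T, (if progenyEvent k n l then ∏ i, r (l i) else 0) := by
          rw [Finset.sum_const, Finset.card_univ, Fintype.card_fin, nsmul_eq_mul]
  have hnn0 : (n : ℝ≥0∞) ≠ 0 := Nat.cast_ne_zero.2 hn0.ne'
  have hnnt : (n : ℝ≥0∞) ≠ ⊤ := ENNReal.natCast_ne_top n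
  rw [hP, hC]
  calc ∑ l ∈ T, (if progenyEvent k n l then ∏ i, r (l i) else 0)
      = (n : ℝ≥0∞)⁻¹ * ((n : ℝ≥0∞)
          * ∑ l ∈ T, (if progenyEvent k n l then ∏ i, r (l i) else 0)) := by
        rw [← mul_assoc, ENNReal.inv_mul_cancel hnn0 hnnt, one_mul]
    _ = (n : ℝ≥0∞)⁻¹ * ((k : ℝ≥0∞) * ∑ l ∈ T, ∏ i, r (l i)) := by rw [← key]
    _ = (k : ℝ≥0∞) / (n : ℝ≥0∞) * ∑ l ∈ T, ∏ i, r (l i) := by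
        rw [div_eq_mul_inv]
        ring
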